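/- There is a constant C such that for every w ∈ C²(ℝ_+×ℝ³), every t ≥ 0 and x ∈ ℝ³: ⟨t−r⟩ |∂_t² w(t,x)| ≤ C Σ_{|α|≤1} |∂ Γ^α w(t,x)| + C t |□w(t,x)|. -/

import Mathlib

open MeasureTheory

noncomputable section

/-- The partial derivative in the `i`-th coordinate direction on `ℝⁿ`. -/
def pd {n : ℕ} (i : Fin n) (u : (Fin n → ℝ) → ℝ) : (Fin n → ℝ) → ℝ :=
  fun z => fderiv ℝ u z (Pi.single i 1)

/-- Iterated application of a family of first-order operators along a list of indices. -/
def opIter {α γ : Type*} (F : α → γ → γ) : List α → γ → γ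
  | [] => id
  | i :: L => fun u => F i (opIter F L u)

/-- The ten vector fields Γ on ℝ×ℝ³ (coordinates: `0 = t`, `1,2,3 = x`):
`∂_t, ∂_{x₁}, ∂_{x₂}, ∂_{x₃}`, the rotations `Ω_{jk} = x_j∂_k - x_k∂_j` (`1 ≤ j < k ≤ 3`)
and the boosts `Ω_{0k} = x_k∂_t + t∂_k` (`k = 1,2,3`). -/
def GammaField (i : Fin 10) (u : (Fin 4 → ℝ) → ℝ) : (Fin 4 → ℝ) → ℝ :=
  if i.val = 0 then pd 0 u
  else if i.val = 1 then pd 1 u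
  else if i.val = 2 then pd 2 u
  else if i.val = 3 then pd 3 u
  else if i.val = 4 then fun z => z 1 * pd 2 u z - z 2 * pd 1 u z
  else if i.val = 5 then fun z => z 1 * pd 3 u z - z 3 * pd 1 u z
  else if i.val = 6 then fun z => z 2 * pd 3 u z - z 3 * pd 2 u z
  else if i.val = 7 then fun z => z 1 * pd 0 u z + z 0 * pd 1 u z
  else if i.val = 8 then fun z => z 2 * pd 0 u z + z 0 * pd 2 u z
  else fun z => z 3 * pd 0 u z + z 0 * pd 3 u z

/-- The spatial radius `r = |x|` of a space-time point. -/
def rad (z : Fin 4 → ℝ) : ℝ := Real.sqrt ((z 1)^2 + (z 2)^2 + (z 3)^2)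

/-- The d'Alembertian `□ = ∂_t² - Δ` on ℝ×ℝ³. -/
def Box (u : (Fin 4 → ℝ) → ℝ) : (Fin 4 → ℝ) → ℝ :=
  fun z => pd 0 (pd 0 u) z - pd 1 (pd 1 u) z - pd 2 (pd 2 u) z - pd 3 (pd 3 u) z

/-- The `L²` norm in `x ∈ ℝ³` at fixed time `t`. -/
def L2x (f : (Fin 4 → ℝ) → ℝ) (t : ℝ) : ℝ :=
  Real.sqrt (∫ x : Fin 3 → ℝ, (f (Fin.cons t x))^2)

/-! ### Auxiliary lemmas -/

private lemma contDiff_pd {w : (Fin 4 → ℝ) → ℝ} (hw : ContDiff ℝ 2 w) (i : Fin 4) :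
    ContDiff ℝ 1 (pd i w) := by
  have h := hw.fderiv_right (m := 1) (by norm_num)
  exact h.clm_apply contDiff_const

private lemma diff_pd {w : (Fin 4 → ℝ) → ℝ} (hw : ContDiff ℝ 2 w) (i : Fin 4) :
    Differentiable ℝ (pd i w) := (contDiff_pd hw i).differentiable one_ne_zero

private lemma pd_pd {w : (Fin 4 → ℝ) → ℝ} (hw : ContDiff ℝ 2 w) (i j : Fin 4) (z : Fin 4 → ℝ) :
    pd i (pd j w) z = fderiv ℝ (fderiv ℝ w) z (Pi.single i 1) (Pi.single j 1) := by
  have hc : DifferentiableAt ℝ (fderiv ℝ w) z :=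
    ((hw.fderiv_right (m := 1) (by norm_num)).differentiable one_ne_zero) z
  have h := fderiv_clm_apply (𝕜 := ℝ) hc (differentiableAt_const (Pi.single j (1:ℝ)))
  show fderiv ℝ (fun y => fderiv ℝ w y (Pi.single j 1)) z (Pi.single i 1) = _
  rw [h]; simp

private lemma pd_symm {w : (Fin 4 → ℝ) → ℝ} (hw : ContDiff ℝ 2 w) (i j : Fin 4) (z : Fin 4 → ℝ) :
    pd i (pd j w) z = pd j (pd i w) z := by
  rw [pd_pd hw, pd_pd hw]
  have hdiff : Differentiable ℝ w := hw.differentiable two_ne_zero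
  have hc : DifferentiableAt ℝ (fderiv ℝ w) z :=
    ((hw.fderiv_right (m := 1) (by norm_num)).differentiable one_ne_zero) z
  exact second_derivative_symmetric (fun y => (hdiff y).hasFDerivAt) hc.hasFDerivAt _ _

private lemma pd_add {f g : (Fin 4 → ℝ) → ℝ} {z : Fin 4 → ℝ} (hf : DifferentiableAt ℝ f z)
    (hg : DifferentiableAt ℝ g z) (i : Fin 4) :
    pd i (fun y => f y + g y) z = pd i f z + pd i g z := by
  simp only [pd, fderiv_fun_add hf hg]; simp

private lemma pd_coord_mul {g : (Fin 4 → ℝ) → ℝ} {z : Fin 4 → ℝ} (hg : DifferentiableAt ℝ g z)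
    (i a : Fin 4) :
    pd i (fun y => y a * g y) z = (if a = i then 1 else 0) * g z + z a * pd i g z := by
  have hca : DifferentiableAt ℝ (fun y : Fin 4 → ℝ => y a) z :=
    (ContinuousLinearMap.proj a : (Fin 4 → ℝ) →L[ℝ] ℝ).differentiableAt
  simp only [pd]
  rw [fderiv_fun_mul hca hg]
  have h2 : fderiv ℝ (fun y : Fin 4 → ℝ => y a) z
      = (ContinuousLinearMap.proj a : (Fin 4 → ℝ) →L[ℝ] ℝ) :=
    (ContinuousLinearMap.proj a : (Fin 4 → ℝ) →L[ℝ] ℝ).fderiv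
  simp [h2, Pi.single_apply, mul_comm]
  rw [add_comm]

private lemma pd_boost {w : (Fin 4 → ℝ) → ℝ} (hw : ContDiff ℝ 2 w) (i a b c : Fin 4)
    (z : Fin 4 → ℝ) :
    pd i (fun y => y a * pd b w y + y 0 * pd c w y) z
      = ((if a = i then 1 else 0) * pd b w z + z a * pd i (pd b w) z)
        + ((if (0:Fin 4) = i then 1 else 0) * pd c w z + z 0 * pd i (pd c w) z) := by
  have h1 : DifferentiableAt ℝ (fun y : Fin 4 → ℝ => y a * pd b w y) z :=
    ((ContinuousLinearMap.proj a : (Fin 4 → ℝ) →L[ℝ] ℝ).differentiableAt).mul (diff_pd hw b z)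
  have h2 : DifferentiableAt ℝ (fun y : Fin 4 → ℝ => y 0 * pd c w y) z :=
    ((ContinuousLinearMap.proj 0 : (Fin 4 → ℝ) →L[ℝ] ℝ).differentiableAt).mul (diff_pd hw c z)
  rw [pd_add h1 h2, pd_coord_mul (diff_pd hw b z), pd_coord_mul (diff_pd hw c z)]

private lemma key_identity {w : (Fin 4 → ℝ) → ℝ} (hw : ContDiff ℝ 2 w) (z : Fin 4 → ℝ) :
    ((z 0)^2 - (z 1)^2 - (z 2)^2 - (z 3)^2) * pd 0 (pd 0 w) z
      = (z 0)^2 * Box w z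
        + (z 0 * pd 1 (GammaField 7 w) z - z 1 * pd 0 (GammaField 7 w) z)
        + (z 0 * pd 2 (GammaField 8 w) z - z 2 * pd 0 (GammaField 8 w) z)
        + (z 0 * pd 3 (GammaField 9 w) z - z 3 * pd 0 (GammaField 9 w) z)
        - 3 * (z 0 * pd 0 w z)
        + (z 1 * pd 1 w z + z 2 * pd 2 w z + z 3 * pd 3 w z) := by
  have e7 : GammaField 7 w = fun y => y 1 * pd 0 w y + y 0 * pd 1 w y := rfl
  have e8 : GammaField 8 w = fun y => y 2 * pd 0 w y + y 0 * pd 2 w y := rfl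
  have e9 : GammaField 9 w = fun y => y 3 * pd 0 w y + y 0 * pd 3 w y := rfl
  rw [e7, e8, e9, pd_boost hw, pd_boost hw, pd_boost hw, pd_boost hw, pd_boost hw, pd_boost hw]
  rw [pd_symm hw 1 0, pd_symm hw 2 0, pd_symm hw 3 0]
  simp only [Box]
  norm_num [Fin.ext_iff]
  ring1
  all_goals (exfalso; omega)

private lemma abs_add_le' {a b A B : ℝ} (ha : |a| ≤ A) (hb : |b| ≤ B) : |a + b| ≤ A + B :=
  (abs_add_le a b).trans (add_le_add ha hb)

private lemma abs_sub_le'' {a b A B : ℝ} (ha : |a| ≤ A) (hb : |b| ≤ B) : |a - b| ≤ A + B := by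
  rw [sub_eq_add_neg]
  exact (abs_add_le a (-b)).trans (add_le_add ha (by rwa [abs_neg]))

private lemma mul_abs_le {c y C : ℝ} (h : |c| ≤ C) : |c * y| ≤ C * |y| := by
  rw [abs_mul]; exact mul_le_mul_of_nonneg_right h (abs_nonneg _)

private lemma sqrt_aux1 {q : ℝ} (h : |q| ≤ 1) : Real.sqrt (1 + q^2) ≤ 1.5 := by
  have hq : q^2 ≤ 1 := by rw [← sq_abs]; nlinarith [abs_nonneg q]
  have h1 : Real.sqrt (1 + q^2) ≤ Real.sqrt 2 := Real.sqrt_le_sqrt (by linarith)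
  have h2 := Real.sq_sqrt (show (0:ℝ) ≤ 2 by norm_num)
  have h3 := Real.sqrt_nonneg 2
  nlinarith

private lemma sqrt_aux2 {q : ℝ} (h : 1 ≤ |q|) : Real.sqrt (1 + q^2) ≤ 1.5 * |q| := by
  have hq : 1 ≤ q^2 := by rw [← sq_abs]; nlinarith
  have h1 : Real.sqrt (1 + q^2) ≤ Real.sqrt (2 * q^2) := Real.sqrt_le_sqrt (by linarith)
  have h2 : Real.sqrt (2 * q^2) = Real.sqrt 2 * |q| := by
    rw [Real.sqrt_mul (by norm_num : (0:ℝ) ≤ 2), Real.sqrt_sq_eq_abs]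
  have h3 : Real.sqrt 2 ≤ 1.5 := by
    nlinarith [Real.sq_sqrt (show (0:ℝ) ≤ 2 by norm_num), Real.sqrt_nonneg 2]
  calc Real.sqrt (1 + q^2) ≤ Real.sqrt 2 * |q| := h2 ▸ h1
    _ ≤ 1.5 * |q| := mul_le_mul_of_nonneg_right h3 (abs_nonneg _)

/-- Klainerman–Sideris type pointwise estimate: there is a constant `C` such
that for every `w ∈ C²(ℝ₊×ℝ³)`, every `t ≥ 0` and `x ∈ ℝ³`,
`⟨t-r⟩ |∂_t² w(t,x)| ≤ C Σ_{|α|≤1} |∂Γ^α w(t,x)| + C t |□w(t,x)|`. -/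
theorem stmt6 :
    ∃ C : ℝ, 0 < C ∧
      ∀ w : (Fin 4 → ℝ) → ℝ, ContDiff ℝ 2 w →
        ∀ t : ℝ, 0 ≤ t → ∀ x : Fin 3 → ℝ,
          Real.sqrt (1 + (t - Real.sqrt ((x 0)^2 + (x 1)^2 + (x 2)^2))^2) *
              |pd 0 (pd 0 w) (Fin.cons t x)| ≤
            C * (∑ n ∈ Finset.range 2, ∑ σ : Fin n → Fin 10, ∑ i : Fin 4,
                  |pd i (opIter GammaField (List.ofFn σ) w) (Fin.cons t x)|) +
            C * t * |Box w (Fin.cons t x)| := by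
  refine ⟨6, by norm_num, ?_⟩
  intro w hw t ht x
  set z : Fin 4 → ℝ := Fin.cons t x with hzdef
  set r : ℝ := Real.sqrt ((x 0)^2 + (x 1)^2 + (x 2)^2) with hrdef
  have hr0 : 0 ≤ r := Real.sqrt_nonneg _
  have hr2 : r^2 = (x 0)^2 + (x 1)^2 + (x 2)^2 :=
    Real.sq_sqrt (by positivity)
  have hx0 : |x 0| ≤ r := by
    rw [hrdef, ← Real.sqrt_sq_eq_abs]
    exact Real.sqrt_le_sqrt (by nlinarith [sq_nonneg (x 1), sq_nonneg (x 2)])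
  have hx1 : |x 1| ≤ r := by
    rw [hrdef, ← Real.sqrt_sq_eq_abs]
    exact Real.sqrt_le_sqrt (by nlinarith [sq_nonneg (x 0), sq_nonneg (x 2)])
  have hx2 : |x 2| ≤ r := by
    rw [hrdef, ← Real.sqrt_sq_eq_abs]
    exact Real.sqrt_le_sqrt (by nlinarith [sq_nonneg (x 0), sq_nonneg (x 1)])
  have hz0 : z 0 = t := rfl
  have hz1 : z 1 = x 0 := rfl
  have hz2 : z 2 = x 1 := rfl
  have hz3 : z 3 = x 2 := rfl
  -- the key identity at z
  have KI := key_identity hw z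
  rw [hz0, hz1, hz2, hz3] at KI
  have KI2 : (t^2 - r^2) * pd 0 (pd 0 w) z
      = t^2 * Box w z
        + (t * pd 1 (GammaField 7 w) z - x 0 * pd 0 (GammaField 7 w) z)
        + (t * pd 2 (GammaField 8 w) z - x 1 * pd 0 (GammaField 8 w) z)
        + (t * pd 3 (GammaField 9 w) z - x 2 * pd 0 (GammaField 9 w) z)
        - 3 * (t * pd 0 w z)
        + (x 0 * pd 1 w z + x 1 * pd 2 w z + x 2 * pd 3 w z) := by
    rw [hr2]; linear_combination KI
  -- absolute value bounds for each term
  have hst : (0:ℝ) ≤ t + r := by linarith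
  have hT1 : |t^2 * Box w z| ≤ (t * (t + r)) * |Box w z| := by
    apply mul_abs_le
    rw [abs_of_nonneg (by positivity : (0:ℝ) ≤ t^2)]
    nlinarith
  have hcoef_t : |t| ≤ t + r := by rw [abs_of_nonneg ht]; linarith
  have hcoef0 : |x 0| ≤ t + r := by linarith
  have hcoef1 : |x 1| ≤ t + r := by linarith
  have hcoef2 : |x 2| ≤ t + r := by linarith
  have hA7 : |t * pd 1 (GammaField 7 w) z - x 0 * pd 0 (GammaField 7 w) z|
      ≤ (t + r) * |pd 1 (GammaField 7 w) z| + (t + r) * |pd 0 (GammaField 7 w) z| :=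
    abs_sub_le'' (mul_abs_le hcoef_t) (mul_abs_le hcoef0)
  have hA8 : |t * pd 2 (GammaField 8 w) z - x 1 * pd 0 (GammaField 8 w) z|
      ≤ (t + r) * |pd 2 (GammaField 8 w) z| + (t + r) * |pd 0 (GammaField 8 w) z| :=
    abs_sub_le'' (mul_abs_le hcoef_t) (mul_abs_le hcoef1)
  have hA9 : |t * pd 3 (GammaField 9 w) z - x 2 * pd 0 (GammaField 9 w) z|
      ≤ (t + r) * |pd 3 (GammaField 9 w) z| + (t + r) * |pd 0 (GammaField 9 w) z| :=
    abs_sub_le'' (mul_abs_le hcoef_t) (mul_abs_le hcoef2)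
  have hTD : |3 * (t * pd 0 w z)| ≤ 3 * ((t + r) * |pd 0 w z|) := by
    rw [abs_mul, abs_of_nonneg (by norm_num : (0:ℝ) ≤ (3:ℝ))]
    exact mul_le_mul_of_nonneg_left (mul_abs_le hcoef_t) (by norm_num)
  have hX : |x 0 * pd 1 w z + x 1 * pd 2 w z + x 2 * pd 3 w z|
      ≤ ((t + r) * |pd 1 w z| + (t + r) * |pd 2 w z|) + (t + r) * |pd 3 w z| :=
    abs_add_le' (abs_add_le' (mul_abs_le hcoef0) (mul_abs_le hcoef1)) (mul_abs_le hcoef2)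
  -- the full pointwise bound, multiplied by (t+r)
  set M : ℝ := t * |Box w z|
      + (|pd 1 (GammaField 7 w) z| + |pd 0 (GammaField 7 w) z|
        + |pd 2 (GammaField 8 w) z| + |pd 0 (GammaField 8 w) z|
        + |pd 3 (GammaField 9 w) z| + |pd 0 (GammaField 9 w) z|)
      + 3 * |pd 0 w z| + (|pd 1 w z| + |pd 2 w z| + |pd 3 w z|) with hMdef
  have hMnn : 0 ≤ M := by
    have := mul_nonneg ht (abs_nonneg (Box w z))
    rw [hMdef]; positivity
  have Hbig : |(t^2 - r^2) * pd 0 (pd 0 w) z| ≤ M * (t + r) := by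
    rw [KI2]
    refine le_trans (abs_add_le' (abs_sub_le'' (abs_add_le' (abs_add_le' (abs_add_le' hT1 hA7)
      hA8) hA9) hTD) hX) ?_
    apply le_of_eq; rw [hMdef]; ring
  -- dividing by (t+r)
  have e1 : |t - r| * (t + r) * |pd 0 (pd 0 w) z| = |(t^2 - r^2) * pd 0 (pd 0 w) z| := by
    rw [show t^2 - r^2 = (t - r) * (t + r) by ring, abs_mul, abs_mul, abs_of_nonneg hst]
  have H1 : |t - r| * |pd 0 (pd 0 w) z| ≤ M := by
    rcases eq_or_lt_of_le hst with hzero | hpos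
    · have ht0 : t = 0 := by linarith
      have hr00 : r = 0 := by linarith
      rw [ht0, hr00]
      simpa using hMnn
    · have h := Hbig
      rw [← e1] at h
      have h2 : (|t - r| * |pd 0 (pd 0 w) z|) * (t + r) ≤ M * (t + r) := by
        calc (|t - r| * |pd 0 (pd 0 w) z|) * (t + r)
            = |t - r| * (t + r) * |pd 0 (pd 0 w) z| := by ring
          _ ≤ M * (t + r) := h
      exact le_of_mul_le_mul_right h2 hpos
  -- lower bounds for the big sum
  set S : ℝ := ∑ n ∈ Finset.range 2, ∑ σ : Fin n → Fin 10, ∑ i : Fin 4,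
      |pd i (opIter GammaField (List.ofFn σ) w) z| with hSdef
  have hSsplit : S
      = (∑ σ : Fin 0 → Fin 10, ∑ i : Fin 4, |pd i (opIter GammaField (List.ofFn σ) w) z|)
        + ∑ σ : Fin 1 → Fin 10, ∑ i : Fin 4, |pd i (opIter GammaField (List.ofFn σ) w) z| := by
    rw [hSdef, Finset.sum_range_succ, Finset.sum_range_one]
  have hF0 : (∑ i : Fin 4, |pd i w z|)
      ≤ ∑ σ : Fin 0 → Fin 10, ∑ i : Fin 4, |pd i (opIter GammaField (List.ofFn σ) w) z| := by
    have e : opIter GammaField (List.ofFn (fun i : Fin 0 => (i.elim0 : Fin 10))) w = w := by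
      have h : List.ofFn (fun i : Fin 0 => (i.elim0 : Fin 10)) = [] := by simp
      rw [h]; rfl
    calc (∑ i : Fin 4, |pd i w z|)
        = ∑ i : Fin 4, |pd i (opIter GammaField
            (List.ofFn (fun i : Fin 0 => (i.elim0 : Fin 10))) w) z| := by rw [e]
      _ ≤ _ := Finset.single_le_sum
          (f := fun σ : Fin 0 → Fin 10 =>
            ∑ i : Fin 4, |pd i (opIter GammaField (List.ofFn σ) w) z|)
          (fun σ _ => Finset.sum_nonneg fun _ _ => abs_nonneg _) (Finset.mem_univ _)
  have hlist : ∀ k : Fin 10,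
      opIter GammaField (List.ofFn (fun _ : Fin 1 => k)) w = GammaField k w := by
    intro k
    have h : List.ofFn (fun _ : Fin 1 => k) = [k] := by simp [List.ofFn_succ, List.ofFn_zero]
    rw [h]; rfl
  have hS1eq : (∑ σ : Fin 1 → Fin 10, ∑ i : Fin 4, |pd i (opIter GammaField (List.ofFn σ) w) z|)
      = ∑ k : Fin 10, ∑ i : Fin 4, |pd i (GammaField k w) z| := by
    rw [← Equiv.sum_comp ((Equiv.funUnique (Fin 1) (Fin 10)).symm)
        (fun σ => ∑ i : Fin 4, |pd i (opIter GammaField (List.ofFn σ) w) z|)]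
    exact Finset.sum_congr rfl fun k _ => by
      rw [show ((Equiv.funUnique (Fin 1) (Fin 10)).symm k) = (fun _ : Fin 1 => k) from rfl,
        hlist k]
  have hsub : (∑ k ∈ ({0, 7, 8, 9} : Finset (Fin 10)), ∑ i : Fin 4, |pd i (GammaField k w) z|)
      ≤ ∑ k : Fin 10, ∑ i : Fin 4, |pd i (GammaField k w) z| :=
    Finset.sum_le_sum_of_subset_of_nonneg (Finset.subset_univ _)
      (fun _ _ _ => Finset.sum_nonneg fun _ _ => abs_nonneg _)
  have hsum4 : (∑ k ∈ ({0, 7, 8, 9} : Finset (Fin 10)), ∑ i : Fin 4, |pd i (GammaField k w) z|)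
      = (∑ i : Fin 4, |pd i (GammaField 0 w) z|) + ((∑ i : Fin 4, |pd i (GammaField 7 w) z|)
        + ((∑ i : Fin 4, |pd i (GammaField 8 w) z|)
          + (∑ i : Fin 4, |pd i (GammaField 9 w) z|))) := by
    rw [Finset.sum_insert (by decide), Finset.sum_insert (by decide),
      Finset.sum_insert (by decide), Finset.sum_singleton]
  have hPle : |pd 0 (pd 0 w) z| ≤ ∑ i : Fin 4, |pd i (GammaField 0 w) z| :=
    Finset.single_le_sum (f := fun i : Fin 4 => |pd i (GammaField 0 w) z|)
      (fun i _ => abs_nonneg _) (Finset.mem_univ 0)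
  have hS2 : (∑ i : Fin 4, |pd i w z|) + (|pd 0 (pd 0 w) z|
      + ((∑ i : Fin 4, |pd i (GammaField 7 w) z|)
        + ((∑ i : Fin 4, |pd i (GammaField 8 w) z|)
          + (∑ i : Fin 4, |pd i (GammaField 9 w) z|)))) ≤ S := by
    rw [hSsplit, hS1eq]
    refine add_le_add hF0 (le_trans ?_ hsub)
    rw [hsum4]
    linarith [hPle]
  have hexp : ∀ u : (Fin 4 → ℝ) → ℝ, (∑ i : Fin 4, |pd i u z|)
      = |pd 0 u z| + |pd 1 u z| + |pd 2 u z| + |pd 3 u z| := fun u =>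
    Fin.sum_univ_four _
  have hBnn : 0 ≤ t * |Box w z| := mul_nonneg ht (abs_nonneg _)
  have hPnn : 0 ≤ |pd 0 (pd 0 w) z| := abs_nonneg _
  have hS3 : |pd 0 (pd 0 w) z| ≤ S := by
    have h1 : (0:ℝ) ≤ ∑ i : Fin 4, |pd i w z| := Finset.sum_nonneg fun _ _ => abs_nonneg _
    have h2 : (0:ℝ) ≤ ∑ i : Fin 4, |pd i (GammaField 7 w) z| :=
      Finset.sum_nonneg fun _ _ => abs_nonneg _
    have h3 : (0:ℝ) ≤ ∑ i : Fin 4, |pd i (GammaField 8 w) z| :=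
      Finset.sum_nonneg fun _ _ => abs_nonneg _
    have h4 : (0:ℝ) ≤ ∑ i : Fin 4, |pd i (GammaField 9 w) z| :=
      Finset.sum_nonneg fun _ _ => abs_nonneg _
    linarith [hS2]
  have hSnn : 0 ≤ S := le_trans hPnn hS3
  rw [hexp w, hexp (GammaField 7 w), hexp (GammaField 8 w), hexp (GammaField 9 w)] at hS2
  clear KI KI2 Hbig e1 hT1 hA7 hA8 hA9 hTD hX hsub hsum4 hS1eq hSsplit hF0 hlist hPle
  clear hcoef_t hcoef0 hcoef1 hcoef2 hx0 hx1 hx2 hr2 hz0 hz1 hz2 hz3 hexp hst hr0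
  rcases le_or_gt (|t - r|) 1 with hcase | hcase
  · have hsq : Real.sqrt (1 + (t - r)^2) ≤ 1.5 := sqrt_aux1 hcase
    calc Real.sqrt (1 + (t - r)^2) * |pd 0 (pd 0 w) z|
        ≤ 1.5 * |pd 0 (pd 0 w) z| := mul_le_mul_of_nonneg_right hsq hPnn
      _ ≤ 6 * S + 6 * t * |Box w z| := by
          have h6 : 6 * t * |Box w z| = 6 * (t * |Box w z|) := by ring
          rw [h6]; linarith [hS3, hBnn]
  · have hsq : Real.sqrt (1 + (t - r)^2) ≤ 1.5 * |t - r| := sqrt_aux2 (le_of_lt hcase)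
    have step1 : Real.sqrt (1 + (t - r)^2) * |pd 0 (pd 0 w) z|
        ≤ 1.5 * (|t - r| * |pd 0 (pd 0 w) z|) := by
      calc Real.sqrt (1 + (t - r)^2) * |pd 0 (pd 0 w) z|
          ≤ (1.5 * |t - r|) * |pd 0 (pd 0 w) z| := mul_le_mul_of_nonneg_right hsq hPnn
        _ = 1.5 * (|t - r| * |pd 0 (pd 0 w) z|) := by ring
    have step2 : 1.5 * (|t - r| * |pd 0 (pd 0 w) z|) ≤ 1.5 * M := by linarith [H1]
    refine step1.trans (step2.trans ?_)
    rw [hMdef]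
    have h6 : 6 * t * |Box w z| = 6 * (t * |Box w z|) := by ring
    rw [h6]
    linarith [hS2, hBnn, hSnn, abs_nonneg (pd 2 (GammaField 7 w) z),
      abs_nonneg (pd 3 (GammaField 7 w) z), abs_nonneg (pd 1 (GammaField 8 w) z),
      abs_nonneg (pd 3 (GammaField 8 w) z), abs_nonneg (pd 1 (GammaField 9 w) z),
      abs_nonneg (pd 2 (GammaField 9 w) z), abs_nonneg (pd 0 w z), abs_nonneg (pd 1 w z),
      abs_nonneg (pd 2 w z), abs_nonneg (pd 3 w z), abs_nonneg (pd 1 (GammaField 7 w) z),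
      abs_nonneg (pd 0 (GammaField 7 w) z), abs_nonneg (pd 2 (GammaField 8 w) z),
      abs_nonneg (pd 0 (GammaField 8 w) z), abs_nonneg (pd 3 (GammaField 9 w) z),
      abs_nonneg (pd 0 (GammaField 9 w) z)]
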